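/- arXiv:2102.11649 — 6 statements merged into one kernel-verified Lean document; each statement's English description precedes it below -/
import Mathlib

section
/- A morphism f : Y ⟶ X of presheaves on a small category C is representable if and only if the induced projection functor from the category of elements of Y to the category of elements of X has a right adjoint. -/
open CategoryTheory CategoryTheory.Limits Opposite

namespace RepElementsAux

universe u

lemma op_isLeftAdjoint_iff {A : Type*} {B : Type*} [Category A] [Category B] (F : A ⥤ B) :
    F.op.IsLeftAdjoint ↔ F.IsRightAdjoint := by
  constructor
  · rintro ⟨G, ⟨h⟩⟩
    exact ⟨G.unop, ⟨(Adjunction.unop h).ofNatIsoRight F.opUnopIso⟩⟩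
  · rintro ⟨L, ⟨h⟩⟩
    exact ⟨L.op, ⟨Adjunction.op h⟩⟩

variable {C : Type u} [SmallCategory C] {Y X : Cᵒᵖ ⥤ Type u} (f : Y ⟶ X)

lemma hasInitial_of_rep (hf : yoneda.relativelyRepresentable f) (A : X.Elements) :
    HasInitial (StructuredArrow A (NatTrans.mapElements f)) := by
  obtain ⟨Γ, x⟩ := A
  let g : yoneda.obj Γ.unop ⟶ X := yonedaEquiv.symm x
  have hgx : yonedaEquiv g = x := Equiv.apply_symm_apply _ _
  let y₀ : Y.obj (op (hf.pullback g)) := yonedaEquiv (hf.fst g)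
  have key : f.app (op (hf.pullback g)) y₀ = X.map (hf.snd g).op x := by
    have h2 := congrArg yonedaEquiv (hf.isPullback g).w
    rw [yonedaEquiv_comp, ← yonedaEquiv_naturality] at h2
    exact h2.trans (congrArg (X.map (hf.snd g).op) hgx)
  let I : StructuredArrow (X.elementsMk Γ x) (NatTrans.mapElements f) :=
    StructuredArrow.mk (Y := Y.elementsMk (op (hf.pullback g)) y₀)
      (CategoryOfElements.homMk _ _ (hf.snd g).op key.symm)
  have hi : ∀ Z : StructuredArrow (X.elementsMk Γ x) (NatTrans.mapElements f),
      yonedaEquiv.symm Z.right.2 ≫ f = yoneda.map Z.hom.val.unop ≫ g := by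
    intro Z
    show _ = yoneda.map Z.hom.val.unop ≫ yonedaEquiv.symm x
    rw [yonedaEquiv_symm_naturality_right, yonedaEquiv_symm_naturality_left]
    exact (congrArg yonedaEquiv.symm Z.hom.2).symm
  refine IsInitial.hasInitial (C := StructuredArrow (X.elementsMk Γ x) (NatTrans.mapElements f)) (X := I) (IsInitial.ofUniqueHom (fun Z => ?_) (fun Z m => ?_))
  · -- existence
    refine StructuredArrow.homMk
      (CategoryOfElements.homMk _ _ (hf.lift (yonedaEquiv.symm Z.right.2) Z.hom.val.unop (hi Z)).op
        ?_) ?_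
    · -- element condition
      show Y.map (hf.lift (yonedaEquiv.symm Z.right.2) Z.hom.val.unop (hi Z)).op
        (yonedaEquiv (hf.fst g)) = Z.right.2
      erw [yonedaEquiv_naturality, hf.lift_fst, Equiv.apply_symm_apply]
    · -- triangle
      apply CategoryOfElements.ext
      show (hf.snd g).op ≫ (hf.lift (yonedaEquiv.symm Z.right.2) Z.hom.val.unop (hi Z)).op
        = Z.hom.val
      erw [← op_comp, hf.lift_snd]
      rfl
  · -- uniqueness
    have hw : (hf.snd g).op ≫ m.right.val = Z.hom.val :=
      congrArg Subtype.val (StructuredArrow.w m)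
    have hsnd : m.right.val.unop ≫ hf.snd g = Z.hom.val.unop := by
      rw [← hw]; rfl
    have hfst : yoneda.map m.right.val.unop ≫ hf.fst g
        = yonedaEquiv.symm Z.right.2 := by
      apply yonedaEquiv.injective
      rw [← yonedaEquiv_naturality, Equiv.apply_symm_apply]
      exact m.right.property
    apply StructuredArrow.hom_ext
    apply CategoryOfElements.ext
    show m.right.val = (hf.lift (yonedaEquiv.symm Z.right.2) Z.hom.val.unop (hi Z)).op
    have h1 : m.right.val.unop = hf.lift (yonedaEquiv.symm Z.right.2) Z.hom.val.unop (hi Z) := by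
      apply hf.hom_ext
      · erw [hfst, hf.lift_fst]
      · erw [hsnd, hf.lift_snd]
    rw [← h1]
    rfl

lemma rep_of_hasInitial
    (h : ∀ A : X.Elements, HasInitial (StructuredArrow A (NatTrans.mapElements f))) :
    yoneda.relativelyRepresentable f := by
  intro a g
  let x : X.obj (op a) := yonedaEquiv g
  haveI := h (X.elementsMk (op a) x)
  let T := ⊥_ (StructuredArrow (X.elementsMk (op a) x) (NatTrans.mapElements f))
  let b : C := T.right.1.unop
  let y₀ : Y.obj (op b) := T.right.2
  let snd : b ⟶ a := T.hom.val.unop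
  let fst : yoneda.obj b ⟶ Y := yonedaEquiv.symm y₀
  have hT : X.map T.hom.val x = f.app _ T.right.2 := T.hom.property
  have comm : fst ≫ f = yoneda.map snd ≫ g := by
    apply yonedaEquiv.injective
    rw [yonedaEquiv_comp, ← yonedaEquiv_naturality]
    show f.app _ (yonedaEquiv (yonedaEquiv.symm y₀)) = _
    rw [Equiv.apply_symm_apply]
    exact hT.symm
  refine ⟨b, snd, fst, ⟨⟨comm⟩, ⟨?_⟩⟩⟩
  apply evaluationJointlyReflectsLimits
  intro k
  refine (isLimitMapConePullbackConeEquiv ((evaluation Cᵒᵖ (Type u)).obj k) comm).symm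
    ((PullbackCone.isLimitEquivBijective _).symm ?_)
  have happ : ∀ (v : k.unop ⟶ b), fst.app k v = Y.map v.op y₀ := fun v => rfl
  constructor
  · -- injectivity
    intro v₁ v₂ hv
    have h1 : fst.app k v₁ = fst.app k v₂ := congrArg (fun p => p.1.1) hv
    have h2 : v₁ ≫ snd = v₂ ≫ snd := congrArg (fun p => p.1.2) hv
    have hu : ∀ (v : k.unop ⟶ b), X.map (v ≫ snd).op x = f.app k (Y.map v.op y₀) := by
      intro v
      rw [op_comp, X.map_comp]
      show X.map v.op (X.map T.hom.val x) = _
      rw [hT]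
      exact (FunctorToTypes.naturality f v.op T.right.2).symm
    have c₂ : Y.map v₂.op y₀ = Y.map v₁.op y₀ := h1.symm
    let Z : StructuredArrow (X.elementsMk (op a) x) (NatTrans.mapElements f) :=
      StructuredArrow.mk (Y := Y.elementsMk k (Y.map v₁.op y₀))
        (CategoryOfElements.homMk _ _ (v₁ ≫ snd).op (hu v₁))
    have hw : ∀ (v : unop k ⟶ b) (hy : Y.map v.op y₀ = Y.map v₁.op y₀),
        v ≫ snd = v₁ ≫ snd →
        T.hom ≫ (NatTrans.mapElements f).map
          (CategoryOfElements.homMk T.right (Y.elementsMk k (Y.map v₁.op y₀)) v.op hy)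
          = Z.hom := by
      intro v hy hvw
      apply CategoryOfElements.ext
      show T.hom.val ≫ v.op = (v₁ ≫ snd).op
      rw [← hvw, op_comp]
      rfl
    have hj : (StructuredArrow.homMk
          (CategoryOfElements.homMk T.right (Y.elementsMk k (Y.map v₁.op y₀)) v₁.op rfl)
          (hw v₁ rfl rfl) : T ⟶ Z)
        = StructuredArrow.homMk
          (CategoryOfElements.homMk T.right (Y.elementsMk k (Y.map v₁.op y₀)) v₂.op c₂)
          (hw v₂ c₂ h2.symm) := initial.hom_ext _ _
    have := congrArg (fun (j : T ⟶ Z) => (j.right.val.unop : unop k ⟶ b)) hj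
    exact this
  · -- surjectivity
    rintro ⟨⟨y, u⟩, hyu⟩
    have hu : X.map u.op x = f.app k y :=
      (map_yonedaEquiv g u).trans hyu.symm
    let Z : StructuredArrow (X.elementsMk (op a) x) (NatTrans.mapElements f) :=
      StructuredArrow.mk (Y := Y.elementsMk k y)
        (CategoryOfElements.homMk _ _ u.op hu)
    let j := initial.to Z
    refine ⟨j.right.val.unop, ?_⟩
    have hj1 : Y.map j.right.val y₀ = y := j.right.property
    have hj2 : T.hom.val ≫ j.right.val = u.op := congrArg Subtype.val (StructuredArrow.w j)
    apply Subtype.ext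
    apply Prod.ext
    · show fst.app k j.right.val.unop = y
      rw [happ]
      exact hj1
    · show j.right.val.unop ≫ snd = u
      have := congrArg Quiver.Hom.unop hj2
      exact this

end RepElementsAux

/-- A morphism `f : Y ⟶ X` of presheaves on a small category `C` is representable if and only
if the induced projection functor between the (usual, contravariant) categories of elements
of `Y` and of `X` has a right adjoint. -/
theorem representable_iff_elements_leftAdjoint
    {C : Type u} [SmallCategory C] {Y X : Cᵒᵖ ⥤ Type u} (f : Y ⟶ X) :
    yoneda.relativelyRepresentable f ↔ (NatTrans.mapElements f).op.IsLeftAdjoint := by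
  rw [RepElementsAux.op_isLeftAdjoint_iff, isRightAdjoint_iff_hasInitial_structuredArrow]
  exact ⟨RepElementsAux.hasInitial_of_rep f, RepElementsAux.rep_of_hasInitial f⟩
end

section
/- If p : E ⥤ C is a Grothendieck fibration, then pullback (base change) of categories along p preserves left adjoints: for any functor q : A ⥤ C, if q has a right adjoint over C then its pullback along p has a right adjoint. -/
open CategoryTheory CategoryTheory.Limits

universe u

/-- A functor, seen as a morphism in the category `Cat`. -/
def catHomOf {A B : Type u} [Category.{u} A] [Category.{u} B] (F : A ⥤ B) :
    Cat.of A ⟶ Cat.of B := F.toCatHom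

namespace FibPull

variable {A C E : Type u} [Category.{u} A] [Category.{u} C] [Category.{u} E]

/-- Explicit strict pullback category of `q : A ⥤ C` and `p : E ⥤ C`. -/
structure PB (q : A ⥤ C) (p : E ⥤ C) : Type u where
  a : A
  e : E
  h : q.obj a = p.obj e

variable {q : A ⥤ C} {p : E ⥤ C}

/-- Morphisms in the strict pullback category. -/
@[ext]
structure PBHom (x y : PB q p) : Type u where
  fa : x.a ⟶ y.a
  fe : x.e ⟶ y.e
  w : q.map fa ≫ eqToHom y.h = eqToHom x.h ≫ p.map fe

instance : Category.{u} (PB q p) where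
  Hom := PBHom
  id x := ⟨𝟙 x.a, 𝟙 x.e, by simp⟩
  comp {x y z} f g := ⟨f.fa ≫ g.fa, f.fe ≫ g.fe, by
    simp only [Functor.map_comp, Category.assoc, g.w]
    rw [reassoc_of% f.w]⟩

@[ext]
lemma hom_ext {x y : PB q p} {f g : x ⟶ y} (h1 : f.fa = g.fa) (h2 : f.fe = g.fe) : f = g :=
  PBHom.ext h1 h2

@[simp] lemma id_fa (x : PB q p) : (𝟙 x : PBHom x x).fa = 𝟙 x.a := rfl
@[simp] lemma id_fe (x : PB q p) : (𝟙 x : PBHom x x).fe = 𝟙 x.e := rfl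
@[simp] lemma comp_fa {x y z : PB q p} (f : x ⟶ y) (g : y ⟶ z) :
    (f ≫ g).fa = f.fa ≫ g.fa := rfl
@[simp] lemma comp_fe {x y z : PB q p} (f : x ⟶ y) (g : y ⟶ z) :
    (f ≫ g).fe = f.fe ≫ g.fe := rfl

/-- First projection. -/
@[simps, reducible] def fstP (q : A ⥤ C) (p : E ⥤ C) : PB q p ⥤ A where
  obj x := x.a
  map f := f.fa

/-- Second projection. -/
@[simps, reducible] def sndP (q : A ⥤ C) (p : E ⥤ C) : PB q p ⥤ E where
  obj x := x.e
  map f := f.fe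

lemma proj_comm : fstP q p ⋙ q = sndP q p ⋙ p :=
  CategoryTheory.Functor.ext (fun x => x.h) (fun x y f => by
    simp only [Functor.comp_map, fstP_map, sndP_map]
    rw [← Category.assoc, ← f.w, Category.assoc]
    simp)

/-- Lift a compatible pair of functors to the strict pullback. -/
@[simps, reducible] def liftP {D : Type u} [Category.{u} D] (F : D ⥤ A) (G : D ⥤ E)
    (w : F ⋙ q = G ⋙ p) : D ⥤ PB q p where
  obj d := ⟨F.obj d, G.obj d, Functor.congr_obj w d⟩
  map f := ⟨F.map f, G.map f, by
    have := Functor.congr_hom w f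
    simp only [Functor.comp_map] at this
    rw [this]; simp⟩
  map_id d := by ext <;> simp
  map_comp f g := by ext <;> simp


@[simp] lemma eqToHom_fa {x y : PB q p} (h : x = y) :
    (eqToHom h : PBHom x y).fa = eqToHom (by rw [h]) := by subst h; rfl

@[simp] lemma eqToHom_fe {x y : PB q p} (h : x = y) :
    (eqToHom h : PBHom x y).fe = eqToHom (by rw [h]) := by subst h; rfl

lemma obj_ext {x y : PB q p} (h1 : x.a = y.a) (h2 : x.e = y.e) : x = y := by
  cases x; cases y; cases h1; cases h2; rfl

/-- The explicit pullback cone in `Cat`. -/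
noncomputable def pbCone (q : A ⥤ C) (p : E ⥤ C) :
    PullbackCone (catHomOf q) (catHomOf p) :=
  PullbackCone.mk (W := Cat.of (PB q p))
    (catHomOf (fstP q p)) (catHomOf (sndP q p)) (congrArg Functor.toCatHom proj_comm)

/-- The explicit pullback cone is a limit cone. -/
noncomputable def pbConeIsLimit (q : A ⥤ C) (p : E ⥤ C) : IsLimit (pbCone q p) := by
  apply PullbackCone.IsLimit.mk (congrArg Functor.toCatHom proj_comm)
    (fun s => catHomOf (liftP (s.fst.toFunctor : _ ⥤ A) (s.snd.toFunctor : _ ⥤ E)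
      (by exact congrArg Cat.Hom.toFunctor s.condition)))
    (fun s => rfl) (fun s => rfl)
  intro s m hfst hsnd
  replace hfst := congrArg Cat.Hom.toFunctor hfst
  replace hsnd := congrArg Cat.Hom.toFunctor hsnd
  have hfst' : ∀ d, (m.toFunctor.obj d).a = s.fst.toFunctor.obj d := fun d => Functor.congr_obj hfst d
  have hsnd' : ∀ d, (m.toFunctor.obj d).e = s.snd.toFunctor.obj d := fun d => Functor.congr_obj hsnd d
  apply Cat.Hom.ext
  apply CategoryTheory.Functor.ext
  · intro d d' f
    have h1 := Functor.congr_hom hfst f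
    have h2 := Functor.congr_hom hsnd f
    apply hom_ext
    · have h1' : (m.toFunctor.map f).fa = eqToHom (hfst' d) ≫ s.fst.toFunctor.map f ≫ eqToHom (hfst' d').symm := h1
      refine h1'.trans ?_
      erw [comp_fa, comp_fa, eqToHom_fa, eqToHom_fa]
      rfl
    · have h2' : (m.toFunctor.map f).fe = eqToHom (hsnd' d) ≫ s.snd.toFunctor.map f ≫ eqToHom (hsnd' d').symm := h2
      refine h2'.trans ?_
      erw [comp_fe, comp_fe, eqToHom_fe, eqToHom_fe]
      rfl
  · intro d
    apply obj_ext
    · exact hfst' d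
    · exact hsnd' d


section Main

open Functor.IsPreFibered

set_option linter.unusedSectionVars false

variable {B : Type u} [Category.{u} B]

/-- The induced functor on strict pullbacks. -/
@[reducible] def LP (p : E ⥤ C) {qA : A ⥤ C} (qB : B ⥤ C) (L : A ⥤ B) (hL : L ⋙ qB = qA) :
    PB qA p ⥤ PB qB p :=
  liftP (fstP qA p ⋙ L) (sndP qA p) (by rw [Functor.assoc, hL]; exact proj_comm)

variable {p : E ⥤ C} {qA : A ⥤ C} {qB : B ⥤ C} {L : A ⥤ B} {hL : L ⋙ qB = qA}

@[simp] lemma LP_obj_a (x : PB qA p) : ((LP p qB L hL).obj x).a = L.obj x.a := rfl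
@[simp] lemma LP_obj_e (x : PB qA p) : ((LP p qB L hL).obj x).e = x.e := rfl
@[simp] lemma LP_map_fa {x y : PB qA p} (f : x ⟶ y) :
    ((LP p qB L hL).map f).fa = L.map f.fa := rfl
@[simp] lemma LP_map_fe {x y : PB qA p} (f : x ⟶ y) :
    ((LP p qB L hL).map f).fe = f.fe := rfl

section Terminal


/-- The base comparison morphism. -/
def cmT (p : E ⥤ C) [Functor.IsFibered p] {qA : A ⥤ C}
    (qB : B ⥤ C) (L : A ⥤ B) (R : B ⥤ A) (adj : L ⊣ R) (hL : L ⋙ qB = qA) (x : PB qB p) : qB.obj (L.obj (R.obj x.a)) ⟶ p.obj x.e :=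
  qB.map (adj.counit.app x.a) ≫ eqToHom x.h

/-- Domain of a cartesian lift of `cmT`. -/
noncomputable def e0T (p : E ⥤ C) [Functor.IsFibered p] {qA : A ⥤ C}
    (qB : B ⥤ C) (L : A ⥤ B) (R : B ⥤ A) (adj : L ⊣ R) (hL : L ⋙ qB = qA) (x : PB qB p) : E := pullbackObj (p := p) (a := x.e) rfl (cmT p qB L R adj hL x)

/-- The cartesian lift of `cmT`. -/
noncomputable def phiT (p : E ⥤ C) [Functor.IsFibered p] {qA : A ⥤ C}
    (qB : B ⥤ C) (L : A ⥤ B) (R : B ⥤ A) (adj : L ⊣ R) (hL : L ⋙ qB = qA) (x : PB qB p) : e0T p qB L R adj hL x ⟶ x.e := pullbackMap rfl (cmT p qB L R adj hL x)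

instance (p : E ⥤ C) [Functor.IsFibered p] {qA : A ⥤ C}
    (qB : B ⥤ C) (L : A ⥤ B) (R : B ⥤ A) (adj : L ⊣ R) (hL : L ⋙ qB = qA) (x : PB qB p) :
    p.IsCartesian (cmT p qB L R adj hL x) (phiT p qB L R adj hL x) :=
  pullbackMap.IsCartesian rfl (cmT p qB L R adj hL x)

instance (p : E ⥤ C) [Functor.IsFibered p] {qA : A ⥤ C}
    (qB : B ⥤ C) (L : A ⥤ B) (R : B ⥤ A) (adj : L ⊣ R) (hL : L ⋙ qB = qA) (x : PB qB p) :
    p.IsStronglyCartesian (cmT p qB L R adj hL x) (phiT p qB L R adj hL x) :=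
  Functor.IsFibered.isStronglyCartesian_of_isCartesian p _ _

lemma he0T (p : E ⥤ C) [Functor.IsFibered p] {qA : A ⥤ C}
    (qB : B ⥤ C) (L : A ⥤ B) (R : B ⥤ A) (adj : L ⊣ R) (hL : L ⋙ qB = qA) (x : PB qB p) : p.obj (e0T p qB L R adj hL x) = qB.obj (L.obj (R.obj x.a)) :=
  pullbackObj_proj rfl (cmT p qB L R adj hL x)

lemma hLRxT (p : E ⥤ C) [Functor.IsFibered p] {qA : A ⥤ C}
    (qB : B ⥤ C) (L : A ⥤ B) (R : B ⥤ A) (adj : L ⊣ R) (hL : L ⋙ qB = qA) (x : PB qB p) : qB.obj (L.obj (R.obj x.a)) = qA.obj (R.obj x.a) := Functor.congr_obj hL _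

/-- The candidate terminal object. -/
@[reducible] noncomputable def y0T (p : E ⥤ C) [Functor.IsFibered p] {qA : A ⥤ C}
    (qB : B ⥤ C) (L : A ⥤ B) (R : B ⥤ A) (adj : L ⊣ R) (hL : L ⋙ qB = qA) (x : PB qB p) : PB qA p :=
  ⟨R.obj x.a, e0T p qB L R adj hL x,
    (hLRxT p qB L R adj hL x).symm.trans (he0T p qB L R adj hL x).symm⟩

lemma u0wT (p : E ⥤ C) [Functor.IsFibered p] {qA : A ⥤ C}
    (qB : B ⥤ C) (L : A ⥤ B) (R : B ⥤ A) (adj : L ⊣ R) (hL : L ⋙ qB = qA) (x : PB qB p) : qB.map (adj.counit.app x.a) ≫ eqToHom x.h =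
    eqToHom (((LP p qB L hL).obj (y0T p qB L R adj hL x)).h) ≫
      p.map (phiT p qB L R adj hL x) := by
  rw [IsHomLift.fac' p (cmT p qB L R adj hL x) (phiT p qB L R adj hL x)]
  simp [cmT]

/-- The structure morphism of the candidate terminal object. -/
noncomputable def u0T (p : E ⥤ C) [Functor.IsFibered p] {qA : A ⥤ C}
    (qB : B ⥤ C) (L : A ⥤ B) (R : B ⥤ A) (adj : L ⊣ R) (hL : L ⋙ qB = qA) (x : PB qB p) : (LP p qB L hL).obj (y0T p qB L R adj hL x) ⟶ x :=
  ⟨adj.counit.app x.a, phiT p qB L R adj hL x, u0wT p qB L R adj hL x⟩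

@[simp] lemma u0T_fa (p : E ⥤ C) [Functor.IsFibered p] {qA : A ⥤ C}
    (qB : B ⥤ C) (L : A ⥤ B) (R : B ⥤ A) (adj : L ⊣ R) (hL : L ⋙ qB = qA) (x : PB qB p) : (u0T p qB L R adj hL x).fa = adj.counit.app x.a := rfl
@[simp] lemma u0T_fe (p : E ⥤ C) [Functor.IsFibered p] {qA : A ⥤ C}
    (qB : B ⥤ C) (L : A ⥤ B) (R : B ⥤ A) (adj : L ⊣ R) (hL : L ⋙ qB = qA) (x : PB qB p) : (u0T p qB L R adj hL x).fe = phiT p qB L R adj hL x := rfl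


/-- The `A`-component of the universal map. -/
def kaT (p : E ⥤ C) [Functor.IsFibered p] {qA : A ⥤ C}
    (qB : B ⥤ C) (L : A ⥤ B) (R : B ⥤ A) (adj : L ⊣ R) (hL : L ⋙ qB = qA) {x : PB qB p}
    (y : PB qA p) (v : (LP p qB L hL).obj y ⟶ x) : y.a ⟶ R.obj x.a := (adj.homEquiv _ _) v.fa

lemma hLkaT (p : E ⥤ C) [Functor.IsFibered p] {qA : A ⥤ C}
    (qB : B ⥤ C) (L : A ⥤ B) (R : B ⥤ A) (adj : L ⊣ R) (hL : L ⋙ qB = qA) {x : PB qB p}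
    (y : PB qA p) (v : (LP p qB L hL).obj y ⟶ x) : L.map (kaT p qB L R adj hL y v) ≫ adj.counit.app x.a = v.fa := by
  rw [kaT]
  have h2 := (adj.homEquiv y.a x.a).symm_apply_apply v.fa
  rw [Adjunction.homEquiv_counit] at h2
  exact h2

/-- The base morphism over which the `E`-component lies. -/
def gbT (p : E ⥤ C) [Functor.IsFibered p] {qA : A ⥤ C}
    (qB : B ⥤ C) (L : A ⥤ B) (R : B ⥤ A) (adj : L ⊣ R) (hL : L ⋙ qB = qA) {x : PB qB p}
    (y : PB qA p) (v : (LP p qB L hL).obj y ⟶ x) : p.obj y.e ⟶ qB.obj (L.obj (R.obj x.a)) :=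
  eqToHom y.h.symm ≫ qA.map (kaT p qB L R adj hL y v) ≫ eqToHom (hLRxT p qB L R adj hL x).symm

lemma gbT_def (p : E ⥤ C) [Functor.IsFibered p] {qA : A ⥤ C}
    (qB : B ⥤ C) (L : A ⥤ B) (R : B ⥤ A) (adj : L ⊣ R) (hL : L ⋙ qB = qA) {x : PB qB p}
    (y : PB qA p) (v : (LP p qB L hL).obj y ⟶ x) :
    gbT p qB L R adj hL y v = eqToHom y.h.symm ≫ qA.map (kaT p qB L R adj hL y v) ≫
      eqToHom (hLRxT p qB L R adj hL x).symm := rfl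

lemma hf'T (p : E ⥤ C) [Functor.IsFibered p] {qA : A ⥤ C}
    (qB : B ⥤ C) (L : A ⥤ B) (R : B ⥤ A) (adj : L ⊣ R) (hL : L ⋙ qB = qA) {x : PB qB p}
    (y : PB qA p) (v : (LP p qB L hL).obj y ⟶ x) :
    p.map v.fe = gbT p qB L R adj hL y v ≫ cmT p qB L R adj hL x := by
  have hqB : qB.map (L.map (kaT p qB L R adj hL y v)) =
      eqToHom (Functor.congr_obj hL y.a) ≫ qA.map (kaT p qB L R adj hL y v) ≫
        eqToHom (Functor.congr_obj hL (R.obj x.a)).symm := by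
    have h3 := Functor.congr_hom hL (kaT p qB L R adj hL y v)
    simp only [Functor.comp_map] at h3
    exact h3
  have h1 : p.map v.fe =
      eqToHom (((LP p qB L hL).obj y).h).symm ≫ qB.map v.fa ≫ eqToHom x.h := by
    rw [v.w]; simp
  rw [h1, ← hLkaT p qB L R adj hL y v, Functor.map_comp, gbT, cmT, hqB]
  simp

/-- The `E`-component of the universal map. -/
noncomputable def keT (p : E ⥤ C) [Functor.IsFibered p] {qA : A ⥤ C}
    (qB : B ⥤ C) (L : A ⥤ B) (R : B ⥤ A) (adj : L ⊣ R) (hL : L ⋙ qB = qA) {x : PB qB p}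
    (y : PB qA p) (v : (LP p qB L hL).obj y ⟶ x) : y.e ⟶ e0T p qB L R adj hL x :=
  Functor.IsStronglyCartesian.map p (cmT p qB L R adj hL x) (phiT p qB L R adj hL x)
    (hf'T p qB L R adj hL y v) v.fe

lemma keT_fac (p : E ⥤ C) [Functor.IsFibered p] {qA : A ⥤ C}
    (qB : B ⥤ C) (L : A ⥤ B) (R : B ⥤ A) (adj : L ⊣ R) (hL : L ⋙ qB = qA) {x : PB qB p}
    (y : PB qA p) (v : (LP p qB L hL).obj y ⟶ x) : keT p qB L R adj hL y v ≫ phiT p qB L R adj hL x = v.fe :=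
  Functor.IsStronglyCartesian.fac p _ _ _ _

instance (p : E ⥤ C) [Functor.IsFibered p] {qA : A ⥤ C}
    (qB : B ⥤ C) (L : A ⥤ B) (R : B ⥤ A) (adj : L ⊣ R) (hL : L ⋙ qB = qA) {x : PB qB p}
    (y : PB qA p) (v : (LP p qB L hL).obj y ⟶ x) :
    p.IsHomLift (gbT p qB L R adj hL y v) (keT p qB L R adj hL y v) :=
  Functor.IsStronglyCartesian.map_isHomLift p _ _ _ _

lemma kwT (p : E ⥤ C) [Functor.IsFibered p] {qA : A ⥤ C}
    (qB : B ⥤ C) (L : A ⥤ B) (R : B ⥤ A) (adj : L ⊣ R) (hL : L ⋙ qB = qA) {x : PB qB p}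
    (y : PB qA p) (v : (LP p qB L hL).obj y ⟶ x) : qA.map (kaT p qB L R adj hL y v) ≫ eqToHom ((y0T p qB L R adj hL x).h) =
    eqToHom y.h ≫ p.map (keT p qB L R adj hL y v) := by
  have h5 := IsHomLift.fac' p (gbT p qB L R adj hL y v) (keT p qB L R adj hL y v)
  simp only [gbT_def] at h5
  rw [h5]
  simp

/-- The universal map to the candidate terminal object. -/
noncomputable def kT (p : E ⥤ C) [Functor.IsFibered p] {qA : A ⥤ C}
    (qB : B ⥤ C) (L : A ⥤ B) (R : B ⥤ A) (adj : L ⊣ R) (hL : L ⋙ qB = qA) {x : PB qB p}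
    (y : PB qA p) (v : (LP p qB L hL).obj y ⟶ x) : y ⟶ y0T p qB L R adj hL x :=
  ⟨kaT p qB L R adj hL y v, keT p qB L R adj hL y v, kwT p qB L R adj hL y v⟩

lemma kT_comm (p : E ⥤ C) [Functor.IsFibered p] {qA : A ⥤ C}
    (qB : B ⥤ C) (L : A ⥤ B) (R : B ⥤ A) (adj : L ⊣ R) (hL : L ⋙ qB = qA) {x : PB qB p}
    (y : PB qA p) (v : (LP p qB L hL).obj y ⟶ x) : (LP p qB L hL).map (kT p qB L R adj hL y v) ≫ u0T p qB L R adj hL x = v := by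
  apply hom_ext
  · exact hLkaT p qB L R adj hL y v
  · exact keT_fac p qB L R adj hL y v

lemma kT_uniq (p : E ⥤ C) [Functor.IsFibered p] {qA : A ⥤ C}
    (qB : B ⥤ C) (L : A ⥤ B) (R : B ⥤ A) (adj : L ⊣ R) (hL : L ⋙ qB = qA) {x : PB qB p}
    (y : PB qA p) (v : (LP p qB L hL).obj y ⟶ x) (k' : y ⟶ y0T p qB L R adj hL x)
    (hk' : (LP p qB L hL).map k' ≫ u0T p qB L R adj hL x = v) :
    k' = kT p qB L R adj hL y v := by
  have hfa : L.map k'.fa ≫ adj.counit.app x.a = v.fa := by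
    have := congrArg PBHom.fa hk'
    simpa using this
  have hfe : k'.fe ≫ phiT p qB L R adj hL x = v.fe := by
    have := congrArg PBHom.fe hk'
    simpa using this
  have hka : k'.fa = kaT p qB L R adj hL y v := by
    rw [kaT, ← hfa]
    have h2 := (adj.homEquiv y.a x.a).apply_symm_apply k'.fa
    erw [Adjunction.homEquiv_counit] at h2
    exact h2.symm
  haveI hlift : p.IsHomLift (gbT p qB L R adj hL y v) k'.fe := by
    apply IsHomLift.of_commsq p _ k'.fe rfl (he0T p qB L R adj hL x)
    have hw2 := k'.w
    rw [gbT_def, ← hka, ← eqToHom_trans ((y0T p qB L R adj hL x).h) (he0T p qB L R adj hL x),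
      reassoc_of% hw2]
    simp
  apply hom_ext
  · exact hka
  · exact Functor.IsStronglyCartesian.map_uniq p (cmT p qB L R adj hL x)
      (phiT p qB L R adj hL x) (hf'T p qB L R adj hL y v) v.fe k'.fe hfe

end Terminal

lemma costructuredArrow_hasTerminal (p : E ⥤ C) [Functor.IsFibered p] {qA : A ⥤ C}
    (qB : B ⥤ C) (L : A ⥤ B) (R : B ⥤ A) (adj : L ⊣ R) (hL : L ⋙ qB = qA) (x : PB qB p) :
    HasTerminal (CostructuredArrow (LP p qB L hL) x) := by
  have hterm : IsTerminal (CostructuredArrow.mk (u0T p qB L R adj hL x)) := by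
    apply IsTerminal.ofUniqueHom
      (fun g => CostructuredArrow.homMk (kT p qB L R adj hL g.left g.hom)
        (kT_comm p qB L R adj hL g.left g.hom))
    intro g m
    apply CostructuredArrow.hom_ext
    exact kT_uniq p qB L R adj hL g.left g.hom m.left (CostructuredArrow.w m)
  exact hterm.hasTerminal

lemma LP_isLeftAdjoint (p : E ⥤ C) [Functor.IsFibered p] {qA : A ⥤ C}
    (qB : B ⥤ C) (L : A ⥤ B) (R : B ⥤ A) (adj : L ⊣ R) (hL : L ⋙ qB = qA) : (LP p qB L hL).IsLeftAdjoint := by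
  have : ∀ x, HasTerminal (CostructuredArrow (LP p qB L hL) x) :=
    costructuredArrow_hasTerminal p qB L R adj hL
  exact isLeftAdjoint_of_costructuredArrowTerminals _

end Main


end FibPull

/-- Pullback along a Grothendieck fibration preserves left adjoints: given a fibration
`p : E ⥤ C` and an adjunction `L ⊣ R` with `L : A ⥤ B` lying over `C` (via `qA`, `qB`), the
induced functor between the pullback categories `A ×_C E ⥤ B ×_C E` is again a left
adjoint, i.e. admits a right adjoint. -/
theorem fibration_pullback_preserves_leftAdjoint
    {A B C E : Type u} [Category.{u} A] [Category.{u} B] [Category.{u} C] [Category.{u} E]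
    (p : E ⥤ C) [p.IsFibered]
    (qA : A ⥤ C) (qB : B ⥤ C) (L : A ⥤ B) (R : B ⥤ A) (adj : L ⊣ R)
    (hL : L ⋙ qB = qA)
    (eq₁ : catHomOf qA ≫ 𝟙 (Cat.of C) = catHomOf L ≫ catHomOf qB)
    (eq₂ : catHomOf p ≫ 𝟙 (Cat.of C) = 𝟙 (Cat.of E) ≫ catHomOf p) :
    Functor.IsLeftAdjoint
      (pullback.map (C := Cat.{u, u})
        (catHomOf qA) (catHomOf p) (catHomOf qB) (catHomOf p)
        (catHomOf L) (𝟙 (Cat.of E)) (𝟙 (Cat.of C)) eq₁ eq₂).toFunctor := by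
  classical
  let isoA := (FibPull.pbConeIsLimit qA p).conePointUniqueUpToIso
      (pullbackIsPullback (catHomOf qA) (catHomOf p))
  let isoB := (FibPull.pbConeIsLimit qB p).conePointUniqueUpToIso
      (pullbackIsPullback (catHomOf qB) (catHomOf p))
  have hA1 : isoA.hom ≫ pullback.fst (catHomOf qA) (catHomOf p) = catHomOf (FibPull.fstP qA p) := by
    exact (FibPull.pbConeIsLimit qA p).conePointUniqueUpToIso_hom_comp
      (pullbackIsPullback (catHomOf qA) (catHomOf p)) WalkingCospan.left
  have hA2 : isoA.hom ≫ pullback.snd (catHomOf qA) (catHomOf p) = catHomOf (FibPull.sndP qA p) := by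
    exact (FibPull.pbConeIsLimit qA p).conePointUniqueUpToIso_hom_comp
      (pullbackIsPullback (catHomOf qA) (catHomOf p)) WalkingCospan.right
  have hB1 : isoB.hom ≫ pullback.fst (catHomOf qB) (catHomOf p) = catHomOf (FibPull.fstP qB p) := by
    exact (FibPull.pbConeIsLimit qB p).conePointUniqueUpToIso_hom_comp
      (pullbackIsPullback (catHomOf qB) (catHomOf p)) WalkingCospan.left
  have hB2 : isoB.hom ≫ pullback.snd (catHomOf qB) (catHomOf p) = catHomOf (FibPull.sndP qB p) := by
    exact (FibPull.pbConeIsLimit qB p).conePointUniqueUpToIso_hom_comp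
      (pullbackIsPullback (catHomOf qB) (catHomOf p)) WalkingCospan.right
  have hcomm1 : catHomOf (FibPull.LP p qB L hL) ≫ catHomOf (FibPull.fstP qB p) =
      catHomOf (FibPull.fstP qA p) ≫ catHomOf L := rfl
  have hcomm2 : catHomOf (FibPull.LP p qB L hL) ≫ catHomOf (FibPull.sndP qB p) =
      catHomOf (FibPull.sndP qA p) := rfl
  have key : pullback.map (C := Cat.{u, u})
        (catHomOf qA) (catHomOf p) (catHomOf qB) (catHomOf p)
        (catHomOf L) (𝟙 (Cat.of E)) (𝟙 (Cat.of C)) eq₁ eq₂ =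
      isoA.inv ≫ catHomOf (FibPull.LP p qB L hL) ≫ isoB.hom := by
    erw [Iso.eq_inv_comp]
    apply pullback.hom_ext
    · simp only [Category.assoc]
      erw [pullback.lift_fst]
      exact ((Category.assoc _ _ _).symm.trans (congrArg (· ≫ catHomOf L) hA1)).trans
        (hcomm1.symm.trans ((congrArg (catHomOf (FibPull.LP p qB L hL) ≫ ·) hB1).symm.trans
          (Category.assoc _ _ _).symm))
    · simp only [Category.assoc]
      erw [pullback.lift_snd]
      exact (congrArg (isoA.hom ≫ ·) (Category.comp_id _)).trans (hA2.trans (hcomm2.symm.trans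
        ((congrArg (catHomOf (FibPull.LP p qB L hL) ≫ ·) hB2).symm.trans (Category.assoc _ _ _).symm)))
  rw [key, Cat.comp_eq_comp]; erw [Cat.comp_eq_comp]
  haveI h1 : Functor.IsLeftAdjoint isoA.inv.toFunctor :=
    (Cat.equivOfIso isoA.symm).isLeftAdjoint_functor
  haveI h2 : Functor.IsLeftAdjoint (catHomOf (FibPull.LP p qB L hL)).toFunctor :=
    FibPull.LP_isLeftAdjoint p qB L R adj hL
  haveI h3 : Functor.IsLeftAdjoint isoB.hom.toFunctor :=
    (Cat.equivOfIso isoB).isLeftAdjoint_functor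
  exact @Functor.isLeftAdjoint_comp _ _ _ _ _ _ _ _ h1 (@Functor.isLeftAdjoint_comp _ _ _ _ _ _ _ _ h2 h3)
end

section
/- Let p : E ⥤ C be a Grothendieck fibration between small categories and let f : Y ⟶ X be a representable morphism of presheaves on C. Then the morphism p^* f : p^* Y ⟶ p^* X of presheaves on E, obtained by precomposition with p, is representable. -/
open CategoryTheory Limits

/-- Elementwise universal property of a pullback square in `Type u`. -/
lemma isPullback_types_existsUnique {P X Y Z : Type u} {fst : P ⟶ X} {snd : P ⟶ Y}
    {f : X ⟶ Z} {g : Y ⟶ Z} (h : IsPullback fst snd f g) (x : X) (y : Y)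
    (hxy : f x = g y) : ∃! z : P, fst z = x ∧ snd z = y := by
  let e := PullbackCone.IsLimit.equivPullbackObj h.isLimit
  refine ⟨e.symm ⟨(x, y), hxy⟩, ⟨?_, ?_⟩, ?_⟩
  · exact PullbackCone.IsLimit.equivPullbackObj_symm_apply_fst h.isLimit ⟨(x, y), hxy⟩
  · exact PullbackCone.IsLimit.equivPullbackObj_symm_apply_snd h.isLimit ⟨(x, y), hxy⟩
  · rintro z ⟨hz₁, hz₂⟩
    apply e.injective
    rw [Equiv.apply_symm_apply]
    ext : 1
    refine Prod.ext ?_ ?_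
    · exact (PullbackCone.IsLimit.equivPullbackObj_apply_fst h.isLimit z).trans hz₁
    · exact (PullbackCone.IsLimit.equivPullbackObj_apply_snd h.isLimit z).trans hz₂

/-- A commutative square of type-valued presheaves which satisfies the elementwise universal
property of a pullback at every object is a pullback square. -/
lemma isPullback_of_ptwise {D : Type u} [SmallCategory D]
    {P X Y Z : Dᵒᵖ ⥤ Type u} {fst : P ⟶ X} {snd : P ⟶ Y} {f : X ⟶ Z} {g : Y ⟶ Z}
    (w : fst ≫ f = snd ≫ g)
    (h : ∀ (d : Dᵒᵖ) (x : X.obj d) (y : Y.obj d), f.app d x = g.app d y →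
      ∃! z : P.obj d, fst.app d z = x ∧ snd.app d z = y) :
    IsPullback fst snd f g := by
  refine ⟨⟨w⟩, ⟨?_⟩⟩
  apply evaluationJointlyReflectsLimits
  intro d
  refine (isLimitMapConePullbackConeEquiv ((evaluation Dᵒᵖ (Type u)).obj d) w).symm ?_
  exact PullbackCone.IsLimit.mk _
    (fun s => TypeCat.ofHom fun x => (h d (s.fst x) (s.snd x) (types_congr_hom s.condition x)).exists.choose)
    (fun s => ConcreteCategory.hom_ext _ _ fun x =>
      (h d (s.fst x) (s.snd x) (types_congr_hom s.condition x)).exists.choose_spec.1)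
    (fun s => ConcreteCategory.hom_ext _ _ fun x =>
      (h d (s.fst x) (s.snd x) (types_congr_hom s.condition x)).exists.choose_spec.2)
    (fun s m hm₁ hm₂ => ConcreteCategory.hom_ext _ _ fun x =>
      (h d (s.fst x) (s.snd x) (types_congr_hom s.condition x)).unique
        ⟨types_congr_hom hm₁ x, types_congr_hom hm₂ x⟩
        ⟨(h d (s.fst x) (s.snd x) (types_congr_hom s.condition x)).exists.choose_spec.1,
         (h d (s.fst x) (s.snd x) (types_congr_hom s.condition x)).exists.choose_spec.2⟩)

/-- If `p : E ⥤ C` is a Grothendieck fibration between small categories and `f : Y ⟶ X` is a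
representable morphism of presheaves on `C`, then the precomposed morphism
`p^* f : p^* Y ⟶ p^* X` of presheaves on `E` is representable. -/
theorem representable_precomp_fibration
    {C E : Type u} [SmallCategory C] [SmallCategory E]
    (p : E ⥤ C) [p.IsFibered] {Y X : Cᵒᵖ ⥤ Type u} (f : Y ⟶ X)
    (hf : yoneda.relativelyRepresentable f) :
    yoneda.relativelyRepresentable (Functor.whiskerLeft p.op f : p.op ⋙ Y ⟶ p.op ⋙ X) := by
  intro e g
  -- the element of `X (p e)` classified by `g`
  set x : X.obj (Opposite.op (p.obj e)) := g.app (Opposite.op e) (𝟙 e) with hx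
  -- the corresponding morphism of presheaves on `C`
  obtain ⟨b, s, fstC, hPB⟩ := hf (yonedaEquiv.symm x)
  -- a cartesian lift of `s` over `e`
  obtain ⟨b', φ, hφ⟩ := Functor.IsPreFibered.exists_isCartesian' (p := p) (a := e) s
  have hb : p.obj b' = b := CategoryTheory.IsHomLift.domain_eq p s φ
  have hfacφ : CategoryTheory.eqToHom hb ≫ s = p.map φ := by
    rw [CategoryTheory.IsHomLift.fac' p s φ]
    simp
  -- value of `g` on a general morphism
  have hg : ∀ {e'' : E} (χ : e'' ⟶ e), g.app (Opposite.op e'') χ = X.map (p.map χ).op x := by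
    intro e'' χ
    have := types_congr_hom (g.naturality χ.op) (𝟙 e)
    simp only [types_comp_apply, yoneda_obj_map] at this
    rw [hx]
    simpa using this
  -- the components of `yonedaEquiv.symm x`
  have hyx : ∀ {c : C} (k : c ⟶ p.obj e),
      (yonedaEquiv.symm x).app (Opposite.op c) k = X.map k.op x := fun k => by
    rfl
  -- the first projection of the new pullback square
  refine ⟨b', φ, ⟨fun e'' => TypeCat.ofHom fun χ => fstC.app (Opposite.op (p.obj e''.unop))
      (p.map χ ≫ CategoryTheory.eqToHom hb), fun {e₁ e₂} δ => ConcreteCategory.hom_ext _ _ fun χ => ?_⟩, ?_⟩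
  · have := types_congr_hom (fstC.naturality (p.map δ.unop).op)
      (p.map χ ≫ CategoryTheory.eqToHom hb)
    simp only [types_comp_apply, yoneda_obj_map] at this
    simpa [Functor.map_comp, Category.assoc] using this
  · apply isPullback_of_ptwise
    · ext e'' χ
      obtain ⟨e''⟩ := e''
      have hw := types_congr_hom (congr_app hPB.w (Opposite.op (p.obj e'')))
        (p.map χ ≫ CategoryTheory.eqToHom hb)
      simp only [FunctorToTypes.comp, yoneda_map_app, TypeCat.ofHom_apply] at hw
      show f.app (Opposite.op (p.obj e''))
          (fstC.app (Opposite.op (p.obj e'')) (p.map χ ≫ CategoryTheory.eqToHom hb))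
        = g.app (Opposite.op e'') (χ ≫ φ)
      rw [hw, hyx, hg, Category.assoc, hfacφ, ← p.map_comp]
    · rintro ⟨e''⟩ x' (h : e'' ⟶ e) hcomp
      -- translate the compatibility condition to `C`
      have hPBd := isPullback_types_existsUnique
        (hPB.map ((evaluation Cᵒᵖ (Type u)).obj (Opposite.op (p.obj e'')))) x' (p.map h)
        (by
          show f.app (Opposite.op (p.obj e'')) x'
            = (yonedaEquiv.symm x).app (Opposite.op (p.obj e'')) (p.map h)
          rw [hyx]
          have h1 : (Functor.whiskerLeft p.op f).app (Opposite.op e'') x' = g.app (Opposite.op e'') h :=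
            hcomp
          rw [hg h] at h1
          exact h1)
      obtain ⟨k, ⟨hk₁, hk₂⟩, hkuniq⟩ := hPBd
      simp only [evaluation_obj_map, yoneda_map_app, TypeCat.ofHom_apply] at hk₁ hk₂
      -- `h` lifts `k ≫ s`
      have hlift : p.IsHomLift (k ≫ s) h := by rw [hk₂]; infer_instance
      obtain ⟨χ, ⟨hχlift, hχcomp⟩, hχuniq⟩ :=
        (Functor.IsFibered.isStronglyCartesian_of_isCartesian p s φ).universal_property'
          (p := p) (f := s) (φ := φ) k h
      haveI := hχlift
      have hχmap : p.map χ ≫ CategoryTheory.eqToHom hb = k := by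
        rw [CategoryTheory.IsHomLift.fac' p k χ]
        simp
      refine ⟨χ, ⟨?_, hχcomp⟩, ?_⟩
      · show fstC.app (Opposite.op (p.obj e'')) (p.map χ ≫ CategoryTheory.eqToHom hb) = x'
        rw [hχmap]
        exact hk₁
      · rintro χ' ⟨hχ'₁, hχ'₂⟩
        have hh : χ' ≫ φ = h := hχ'₂
        -- uniqueness: the image of `χ'` in `C` agrees with `k`
        have hk' : p.map χ' ≫ CategoryTheory.eqToHom hb = k := by
          apply hkuniq
          constructor
          · exact hχ'₁
          · show (p.map χ' ≫ CategoryTheory.eqToHom hb) ≫ s = p.map h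
            rw [Category.assoc, hfacφ, ← p.map_comp, hh]
        have : p.IsHomLift k χ' := by
          apply CategoryTheory.IsHomLift.of_commsq p k χ' rfl hb
          simpa using hk'
        exact hχuniq χ' ⟨this, hh⟩
end

section
/- Local representability is local: for a dependent presheaf Y over a presheaf X on a small category C, a local representability structure on Y over X is the same as a coherent family, indexed by pairs (Γ : C, x ∈ X(Γ)), of local representability structures on the restriction Y|x over the representable presheaf yΓ; the restriction map between these two kinds of data is a bijection. -/
open CategoryTheory Opposite

universe u

variable {C : Type u} [SmallCategory C]

/-- A choice of context extension (representing object, projection, generic element,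
with the universal property) for a dependent presheaf `Y` over `X` at an element
`v = (Γ, x)` of `X`: this is a representation of the presheaf `ρ ↦ Y (x[ρ])` on `C/Γ`. -/
structure ExtData (X : Cᵒᵖ ⥤ Type u) (Y : X.Elements ⥤ Type u) (v : X.Elements) :
    Type u where
  ext : C
  p : ext ⟶ v.1.unop
  q : Y.obj (X.elementsMk (op ext) (X.map p.op v.2))
  universal : ∀ (Δ : C) (σ : Δ ⟶ v.1.unop)
    (y : Y.obj (X.elementsMk (op Δ) (X.map σ.op v.2))),
    ∃! τ : Δ ⟶ ext, ∃ h : τ ≫ p = σ,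
      Y.map (⟨τ.op, by rw [← FunctorToTypes.map_comp_apply, ← op_comp, h]⟩ :
        X.elementsMk (op ext) (X.map p.op v.2) ⟶ X.elementsMk (op Δ) (X.map σ.op v.2)) q = y

/-- A local representability structure for `Y` over `X`: a choice of context extension for
every element of `X`. -/
def LocRepStructure (X : Cᵒᵖ ⥤ Type u) (Y : X.Elements ⥤ Type u) : Type u :=
  ∀ v : X.Elements, ExtData X Y v

/-- A family, indexed by elements `(Γ, x)` of `X`, of local representability structures for
the restriction `Y|x` over the representable presheaf `yΓ`: for each `(Δ, σ : Δ ⟶ Γ)` a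
context extension for the element `x[σ]`. -/
def LocRepFamily (X : Cᵒᵖ ⥤ Type u) (Y : X.Elements ⥤ Type u) : Type u :=
  ∀ (v : X.Elements) (Δ : C) (σ : Δ ⟶ v.1.unop),
    ExtData X Y (X.elementsMk (op Δ) (X.map σ.op v.2))

/-- Coherence of such a family: compatibility under restriction along morphisms of `C`. -/
def Coherent {X : Cᵒᵖ ⥤ Type u} {Y : X.Elements ⥤ Type u} (fam : LocRepFamily X Y) : Prop :=
  ∀ (v : X.Elements) (Δ : C) (σ : Δ ⟶ v.1.unop) (Θ : C) (τ : Θ ⟶ Δ),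
    HEq (fam v Θ (τ ≫ σ)) (fam (X.elementsMk (op Δ) (X.map σ.op v.2)) Θ τ)

/-- The restriction map from local representability structures for `Y` over `X` to coherent
families of local representability structures of the restrictions `Y|x` over `yΓ`. -/
def restrictLocRep (X : Cᵒᵖ ⥤ Type u) (Y : X.Elements ⥤ Type u)
    (s : LocRepStructure X Y) : {fam : LocRepFamily X Y // Coherent fam} :=
  ⟨fun v Δ σ => s (X.elementsMk (op Δ) (X.map σ.op v.2)),
   fun v Δ σ Θ τ => by
     have h : X.elementsMk (op Θ) (X.map (τ ≫ σ).op v.2)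
         = X.elementsMk (op Θ) (X.map τ.op (X.map σ.op v.2)) := by
       rw [op_comp, FunctorToTypes.map_comp_apply]
     exact congr_arg_heq s h⟩

/-- Locality of local representability: the restriction map from local representability
structures for `Y` over `X` to coherent families of local representability structures of the
restrictions `Y|x` over `yΓ` is invertible (a bijection). -/
theorem locRep_locality (X : Cᵒᵖ ⥤ Type u) (Y : X.Elements ⥤ Type u) :
    Function.Bijective (restrictLocRep X Y) := by
  have key : ∀ v : X.Elements,
      X.elementsMk (op v.1.unop) (X.map (𝟙 v.1.unop).op v.2) = v := by
    intro v
    have : X.map (𝟙 v.1.unop).op v.2 = v.2 := by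
      rw [op_id, FunctorToTypes.map_id_apply]
    exact Sigma.ext rfl (heq_of_eq this)
  constructor
  · intro s s' h
    funext v
    have h1 := congr_arg_heq s (key v)
    have h2 := congr_arg_heq s' (key v)
    have e : s (X.elementsMk (op v.1.unop) (X.map (𝟙 v.1.unop).op v.2))
        = s' (X.elementsMk (op v.1.unop) (X.map (𝟙 v.1.unop).op v.2)) := by
      have := congrFun (congrFun (congrFun (congrArg Subtype.val h) v) v.1.unop)
        (𝟙 v.1.unop)
      exact this
    exact eq_of_heq ((h1.symm.trans (heq_of_eq e)).trans h2)
  · rintro ⟨fam, coh⟩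
    refine ⟨fun v => (key v) ▸ fam v v.1.unop (𝟙 v.1.unop), ?_⟩
    apply Subtype.ext
    funext v Δ σ
    show (key (X.elementsMk (op Δ) (X.map σ.op v.2))) ▸ fam (X.elementsMk (op Δ) (X.map σ.op v.2)) Δ (𝟙 Δ) = fam v Δ σ
    have hcoh := coh v Δ σ Δ (𝟙 Δ)
    have hσ : HEq (fam v Δ (𝟙 Δ ≫ σ)) (fam v Δ σ) := by
      congr 1 <;> rw [Category.id_comp]
    have hcast : HEq ((key (X.elementsMk (op Δ) (X.map σ.op v.2))) ▸ fam (X.elementsMk (op Δ) (X.map σ.op v.2)) Δ (𝟙 Δ))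
        (fam (X.elementsMk (op Δ) (X.map σ.op v.2)) Δ (𝟙 Δ)) := by
      exact (eqRec_heq _ _)
    exact eq_of_heq ((hcast.trans hcoh.symm).trans hσ)
end

section
/- Let X be a presheaf on C and Y a locally representable dependent presheaf over X, and Z a dependent presheaf over the total presheaf (x : X) × Y(x). Then the presheaf of dependent natural transformations (y : Y) → Z(y) over X can be computed by: its value at (Γ, x ∈ X(Γ)) is Z evaluated at the extended context (Γ ▷ Y|x, x[p], q); this assignment satisfies the universal property of the dependent product and is hence isomorphic over X to the usual dependent product of presheaves. -/
open CategoryTheory Opposite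

universe u

variable {C : Type u} [SmallCategory C]

/-- The usual dependent product along `Y` of a dependent presheaf `Z` over `Σ X Y`,
evaluated at an element `v = (Γ, x)` of `X`: natural families assigning to each
`σ : Δ ⟶ Γ` and `y ∈ Y(x[σ])` an element of `Z(x[σ], y)`. -/
def PiFam (X : Cᵒᵖ ⥤ Type u) (Y : X.Elements ⥤ Type u) (Z : Y.Elements ⥤ Type u)
    (v : X.Elements) : Type u :=
  {fam : ∀ (Δ : C) (σ : Δ ⟶ v.1.unop) (y : Y.obj (X.elementsMk (op Δ) (X.map σ.op v.2))),
      Z.obj (Y.elementsMk (X.elementsMk (op Δ) (X.map σ.op v.2)) y) //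
    ∀ (Δ : C) (σ : Δ ⟶ v.1.unop) (y : Y.obj (X.elementsMk (op Δ) (X.map σ.op v.2)))
      (Θ : C) (τ : Θ ⟶ Δ),
      Z.map (⟨⟨τ.op, by show X.map τ.op (X.map σ.op v.2) = X.map (τ ≫ σ).op v.2; rw [op_comp, FunctorToTypes.map_comp_apply]⟩, rfl⟩ :
          Y.elementsMk (X.elementsMk (op Δ) (X.map σ.op v.2)) y ⟶
            Y.elementsMk (X.elementsMk (op Θ) (X.map (τ ≫ σ).op v.2))
              (Y.map (⟨τ.op, by show X.map τ.op (X.map σ.op v.2) = X.map (τ ≫ σ).op v.2; rw [op_comp, FunctorToTypes.map_comp_apply]⟩ :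
                X.elementsMk (op Δ) (X.map σ.op v.2) ⟶
                  X.elementsMk (op Θ) (X.map (τ ≫ σ).op v.2)) y))
        (fam Δ σ y) =
        fam Θ (τ ≫ σ)
          (Y.map (⟨τ.op, by show X.map τ.op (X.map σ.op v.2) = X.map (τ ≫ σ).op v.2; rw [op_comp, FunctorToTypes.map_comp_apply]⟩ :
            X.elementsMk (op Δ) (X.map σ.op v.2) ⟶
              X.elementsMk (op Θ) (X.map (τ ≫ σ).op v.2)) y)}

section Aux

variable {X : Cᵒᵖ ⥤ Type u} {Y : X.Elements ⥤ Type u} {v : X.Elements}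
  (e : ExtData X Y v)

/-- The chosen morphism into the context extension. -/
noncomputable def ExtData.chosen (Δ : C) (σ : Δ ⟶ v.1.unop)
    (y : Y.obj (X.elementsMk (op Δ) (X.map σ.op v.2))) : Δ ⟶ e.ext :=
  (e.universal Δ σ y).choose

theorem ExtData.chosen_comp (Δ : C) (σ : Δ ⟶ v.1.unop)
    (y : Y.obj (X.elementsMk (op Δ) (X.map σ.op v.2))) :
    e.chosen Δ σ y ≫ e.p = σ :=
  (e.universal Δ σ y).choose_spec.1.choose

theorem ExtData.chosen_mapX (Δ : C) (σ : Δ ⟶ v.1.unop)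
    (y : Y.obj (X.elementsMk (op Δ) (X.map σ.op v.2))) :
    X.map (e.chosen Δ σ y).op (X.map e.p.op v.2) = X.map σ.op v.2 := by
  rw [← FunctorToTypes.map_comp_apply, ← op_comp, e.chosen_comp Δ σ y]

theorem ExtData.chosen_map (Δ : C) (σ : Δ ⟶ v.1.unop)
    (y : Y.obj (X.elementsMk (op Δ) (X.map σ.op v.2))) :
    Y.map (⟨(e.chosen Δ σ y).op, e.chosen_mapX Δ σ y⟩ :
      X.elementsMk (op e.ext) (X.map e.p.op v.2) ⟶ X.elementsMk (op Δ) (X.map σ.op v.2))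
      e.q = y :=
  (e.universal Δ σ y).choose_spec.1.choose_spec

theorem ExtData.chosen_uniq (Δ : C) (σ : Δ ⟶ v.1.unop)
    (y : Y.obj (X.elementsMk (op Δ) (X.map σ.op v.2))) (t : Δ ⟶ e.ext)
    (h : t ≫ e.p = σ)
    (hy : Y.map (⟨t.op, by rw [← FunctorToTypes.map_comp_apply, ← op_comp, h]⟩ :
      X.elementsMk (op e.ext) (X.map e.p.op v.2) ⟶ X.elementsMk (op Δ) (X.map σ.op v.2))
      e.q = y) : t = e.chosen Δ σ y :=
  (e.universal Δ σ y).choose_spec.2 t ⟨h, hy⟩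

/-- The chosen morphism in the category of elements of `Y`. -/
noncomputable def ExtData.mor (Δ : C) (σ : Δ ⟶ v.1.unop)
    (y : Y.obj (X.elementsMk (op Δ) (X.map σ.op v.2))) :
    Y.elementsMk (X.elementsMk (op e.ext) (X.map e.p.op v.2)) e.q ⟶
      Y.elementsMk (X.elementsMk (op Δ) (X.map σ.op v.2)) y :=
  ⟨⟨(e.chosen Δ σ y).op, e.chosen_mapX Δ σ y⟩, e.chosen_map Δ σ y⟩

theorem homext {Y : X.Elements ⥤ Type u} {a b : Y.Elements} (f g : a ⟶ b)
    (h : f.1.1 = g.1.1) : f = g :=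
  Subtype.ext (Subtype.ext h)

end Aux

/-- For a locally representable `Y` over `X` with chosen context extensions and a dependent
presheaf `Z` over the total presheaf of `Y`, the dependent product of `Z` along `Y` at
`(Γ, x)` is computed as the value of `Z` at the extended context `(Γ ▷ Y|x, x[p], q)`. -/
theorem dependent_product_via_context_extension
    (X : Cᵒᵖ ⥤ Type u) (Y : X.Elements ⥤ Type u) (Z : Y.Elements ⥤ Type u)
    (E : ∀ v : X.Elements, ExtData X Y v) (v : X.Elements) :
    Nonempty (PiFam X Y Z v ≃
      Z.obj (Y.elementsMk (X.elementsMk (op (E v).ext) (X.map (E v).p.op v.2)) (E v).q)) := by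
  classical
  set e := E v with he
  -- key: any family is determined by its value at the generic point
  have key : ∀ (fam : PiFam X Y Z v) (Δ : C) (σ : Δ ⟶ v.1.unop)
      (y : Y.obj (X.elementsMk (op Δ) (X.map σ.op v.2))) (t : Δ ⟶ e.ext)
      (h : t ≫ e.p = σ)
      (hy : Y.map (⟨t.op, by rw [← FunctorToTypes.map_comp_apply, ← op_comp, h]⟩ :
        X.elementsMk (op e.ext) (X.map e.p.op v.2) ⟶ X.elementsMk (op Δ) (X.map σ.op v.2))
        e.q = y),
      fam.1 Δ σ y =
        Z.map (⟨⟨t.op, by rw [← FunctorToTypes.map_comp_apply, ← op_comp, h]⟩, hy⟩ :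
          Y.elementsMk (X.elementsMk (op e.ext) (X.map e.p.op v.2)) e.q ⟶
            Y.elementsMk (X.elementsMk (op Δ) (X.map σ.op v.2)) y)
          (fam.1 e.ext e.p e.q) := by
    intro fam Δ σ y t h hy
    subst h
    subst hy
    exact (fam.2 e.ext e.p e.q Δ t).symm
  refine ⟨{
    toFun := fun fam => fam.1 e.ext e.p e.q
    invFun := fun z => ⟨fun Δ σ y => Z.map (e.mor Δ σ y) z, ?_⟩
    left_inv := fun fam => ?_
    right_inv := fun z => ?_ }⟩
  · intro Δ σ y Θ τ
    rw [← FunctorToTypes.map_comp_apply]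
    refine congrArg (fun m => Z.map m z) (homext _ _ ?_)
    show (e.chosen Δ σ y).op ≫ τ.op = (e.chosen Θ (τ ≫ σ) _).op
    rw [← op_comp]
    congr 1
    have hcomp : (τ ≫ e.chosen Δ σ y) ≫ e.p = τ ≫ σ := by
      rw [Category.assoc, e.chosen_comp]
    refine e.chosen_uniq _ _ _ _ hcomp ?_
    conv_rhs => rw [← e.chosen_map Δ σ y]
    exact (congrArg (fun m => Y.map m e.q)
      (Subtype.ext op_comp)).trans
      (FunctorToTypes.map_comp_apply Y _ _ e.q)
  · apply Subtype.ext
    funext Δ σ y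
    exact (key fam Δ σ y (e.chosen Δ σ y) (e.chosen_comp Δ σ y) (e.chosen_map Δ σ y)).symm
  · show Z.map (e.mor e.ext e.p e.q) z = z
    have h1 : e.chosen e.ext e.p e.q = 𝟙 e.ext := by
      refine (e.chosen_uniq e.ext e.p e.q (𝟙 e.ext) (Category.id_comp _) ?_).symm
      have : (⟨(𝟙 e.ext).op, by
          rw [← FunctorToTypes.map_comp_apply, ← op_comp, Category.id_comp]⟩ :
          X.elementsMk (op e.ext) (X.map e.p.op v.2) ⟶
            X.elementsMk (op e.ext) (X.map e.p.op v.2)) =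
          𝟙 (X.elementsMk (op e.ext) (X.map e.p.op v.2)) := by
        apply Subtype.ext
        rfl
      rw [this, FunctorToTypes.map_id_apply]
    have h2 : e.mor e.ext e.p e.q = 𝟙 _ := by
      apply homext
      show (e.chosen e.ext e.p e.q).op = 𝟙 _
      rw [h1]
      rfl
    rw [h2, FunctorToTypes.map_id_apply]
end

section
/- Let F : C ⥤ D be a functor between small categories and A a dependent presheaf over a presheaf X' on D (equivalently over F_! X when X' = F_! X for X a presheaf on C). Define (F^† A)(Γ, x) := A(F Γ, η_X(x)) where η is the unit of F_! ⊣ F^*. Then elements of A over F_! X (dependent sections) are in natural bijection with elements of F^† A over X; i.e., F^* extends to a dependent right adjoint of F_!. -/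
open CategoryTheory Opposite

universe u

variable {C D : Type u} [SmallCategory C] [SmallCategory D]

/-- Sections of a dependent presheaf `A` over a presheaf `Z` (encoded as a functor on the
category of elements of `Z`): natural families of elements. -/
def Sect {Z : Dᵒᵖ ⥤ Type u} (A : Z.Elements ⥤ Type u) : Type u :=
  {s : ∀ e : Z.Elements, A.obj e // ∀ (e e' : Z.Elements) (f : e ⟶ e'), A.map f (s e) = s e'}

/-- The element of `F_! X` over `F Γ` given by applying the unit of `F_! ⊣ F^*` to an
element `x` of `X` over `Γ`. -/
noncomputable def unitElement (F : C ⥤ D) (X : Cᵒᵖ ⥤ Type u) (e : X.Elements) :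
    (F.op.lan.obj X).Elements :=
  (F.op.lan.obj X).elementsMk (F.op.obj e.1)
    (((F.op.lanAdjunction (Type u)).unit.app X).app e.1 e.2)

/-- The action on elements morphisms of the unit of `F_! ⊣ F^*`. -/
noncomputable def unitElementMap (F : C ⥤ D) (X : Cᵒᵖ ⥤ Type u) {e e' : X.Elements}
    (f : e ⟶ e') : unitElement F X e ⟶ unitElement F X e' :=
  ⟨F.op.map f.1, by
    dsimp [unitElement]
    exact (NatTrans.naturality_apply ((F.op.lanAdjunction (Type u)).unit.app X) f.1 e.2).symm.trans
      (congrArg (((F.op.lanAdjunction (Type u)).unit.app X).app e'.1) f.2)⟩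

section Aux

open Limits

variable (F : C ⥤ D) (X : Cᵒᵖ ⥤ Type u)

/-- The pointwise colimit description of `F_! X`. -/
noncomputable def isoCol (d : Dᵒᵖ) :
    (F.op.lan.obj X).obj d ≅ colimit (CostructuredArrow.proj F.op d ⋙ X) :=
  F.op.leftKanExtensionObjIsoColimit X d

lemma unit_eq :
    ((F.op.lanAdjunction (Type u)).unit.app X) = F.op.leftKanExtensionUnit X := by
  rw [Functor.lanAdjunction_unit]; rfl

lemma rep_eq (d : Dᵒᵖ) (f : CostructuredArrow F.op d) (x : X.obj f.left) :
    (F.op.lan.obj X).map f.hom (((F.op.lanAdjunction (Type u)).unit.app X).app f.left x)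
      = (isoCol F X d).inv (colimit.ι (CostructuredArrow.proj F.op d ⋙ X) f x) := by
  rw [unit_eq]
  exact (types_congr_hom (F.op.ι_leftKanExtensionObjIsoColimit_inv X d f) x).symm

lemma cond_iff (d : Dᵒᵖ) (f : CostructuredArrow F.op d) (x : X.obj f.left)
    (z : (F.op.lan.obj X).obj d) :
    (F.op.lan.obj X).map f.hom (((F.op.lanAdjunction (Type u)).unit.app X).app f.left x) = z ↔
      colimit.ι (CostructuredArrow.proj F.op d ⋙ X) f x = (isoCol F X d).hom z := by
  rw [rep_eq]
  constructor
  · intro h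
    rw [← h]
    exact (types_congr_hom (isoCol F X d).inv_hom_id _).symm
  · intro h
    rw [h]
    exact types_congr_hom (isoCol F X d).hom_inv_id _

/-- Every element of `F_! X` receives an elements-morphism from a unit element. -/
lemma exists_rep (e : (F.op.lan.obj X).Elements) :
    ∃ (e₀ : X.Elements) (_ : unitElement F X e₀ ⟶ e), True := by
  obtain ⟨f, x, hx⟩ := Types.jointly_surjective' ((isoCol F X e.1).hom e.2)
  exact ⟨⟨f.left, x⟩, ⟨f.hom, (cond_iff F X e.1 f x e.2).2 hx⟩, trivial⟩

/-- Well-definedness: any two unit-element representatives of the same element give the same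
value when a section over `X` is transported. -/
lemma welldef (A : (F.op.lan.obj X).Elements ⥤ Type u)
    (t : ∀ e : X.Elements, A.obj (unitElement F X e))
    (ht : ∀ (e e' : X.Elements) (f : e ⟶ e'), A.map (unitElementMap F X f) (t e) = t e')
    (e : (F.op.lan.obj X).Elements) {e₀ e₁ : X.Elements}
    (g₀ : unitElement F X e₀ ⟶ e) (g₁ : unitElement F X e₁ ⟶ e) :
    A.map g₀ (t e₀) = A.map g₁ (t e₁) := by
  set J := CostructuredArrow F.op e.1
  set G := CostructuredArrow.proj F.op e.1 ⋙ X
  -- condition on a pair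
  let cond : (Σ f : J, G.obj f) → Prop := fun p =>
    (F.op.lan.obj X).map p.1.hom
      (((F.op.lanAdjunction (Type u)).unit.app X).app p.1.left p.2) = e.2
  let val : ∀ (p : Σ f : J, G.obj f), cond p → A.obj e := fun p hp =>
    A.map (⟨p.1.hom, hp⟩ : unitElement F X ⟨p.1.left, p.2⟩ ⟶ e) (t ⟨p.1.left, p.2⟩)
  -- the two representatives as pairs
  let p₀ : Σ f : J, G.obj f := ⟨CostructuredArrow.mk g₀.1, e₀.2⟩
  let p₁ : Σ f : J, G.obj f := ⟨CostructuredArrow.mk g₁.1, e₁.2⟩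
  have h₀ : cond p₀ := g₀.2
  have h₁ : cond p₁ := g₁.2
  have hι : colimit.ι G p₀.1 p₀.2 = colimit.ι G p₁.1 p₁.2 := by
    rw [(cond_iff F X e.1 p₀.1 p₀.2 e.2).1 h₀, (cond_iff F X e.1 p₁.1 p₁.2 e.2).1 h₁]
  have key : ∀ (p p' : Σ f : J, G.obj f),
      Relation.EqvGen (G.ColimitTypeRel) p p' →
      (colimit.ι G p.1 p.2 = colimit.ι G p'.1 p'.2) ∧
        ∀ (hp : cond p) (hp' : cond p'), val p hp = val p' hp' := by
    intro p p' h
    induction h with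
    | rel p p' hrel =>
        obtain ⟨φ, hφ⟩ := hrel
        constructor
        · exact Types.colimit_sound φ hφ.symm
        · intro hp hp'
          let fmor : X.elementsMk p.1.left p.2 ⟶ X.elementsMk p'.1.left p'.2 :=
            ⟨φ.left, hφ.symm⟩
          have hcomp : (unitElementMap F X fmor ≫ (⟨p'.1.hom, hp'⟩ :
              unitElement F X ⟨p'.1.left, p'.2⟩ ⟶ e)) =
              (⟨p.1.hom, hp⟩ : unitElement F X ⟨p.1.left, p.2⟩ ⟶ e) := by
            apply Subtype.ext
            exact CostructuredArrow.w φ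
          calc val p hp
              = A.map (unitElementMap F X fmor ≫ ⟨p'.1.hom, hp'⟩) (t ⟨p.1.left, p.2⟩) := by
                rw [hcomp]
            _ = A.map (⟨p'.1.hom, hp'⟩ : unitElement F X ⟨p'.1.left, p'.2⟩ ⟶ e)
                  (A.map (unitElementMap F X fmor) (t ⟨p.1.left, p.2⟩)) := by
                rw [FunctorToTypes.map_comp_apply]
            _ = val p' hp' := by rw [ht _ _ fmor]
    | refl p => exact ⟨rfl, fun hp hp' => rfl⟩
    | symm p p' _ ih => exact ⟨ih.1.symm, fun hp hp' => (ih.2 hp' hp).symm⟩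
    | trans p q p' _ _ ih₁ ih₂ =>
        refine ⟨ih₁.1.trans ih₂.1, fun hp hp' => ?_⟩
        have hq : cond q :=
          (cond_iff F X e.1 q.1 q.2 e.2).2
            (ih₁.1.symm.trans ((cond_iff F X e.1 p.1 p.2 e.2).1 hp))
        exact (ih₁.2 hp hq).trans (ih₂.2 hq hp')
  have := (key p₀ p₁ (Types.colimit_eq hι)).2 h₀ h₁
  exact this

end Aux

/-- Dependent right adjoint to `F_!`: for a dependent presheaf `A` over `F_! X`, sections of
`A` over `F_! X` are in bijection with sections over `X` of the dependent presheaf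
`F^† A = A(F -, η(-))` obtained by restricting along the unit `η : X ⟶ F^* F_! X`. -/
theorem sections_lan_equiv_sections_restrict (F : C ⥤ D) (X : Cᵒᵖ ⥤ Type u)
    (A : (F.op.lan.obj X).Elements ⥤ Type u) :
    Nonempty (Sect A ≃
      {t : ∀ e : X.Elements, A.obj (unitElement F X e) //
        ∀ (e e' : X.Elements) (f : e ⟶ e'), A.map (unitElementMap F X f) (t e) = t e'}) := by
  constructor
  -- chosen representatives
  have rep := exists_rep F X
  refine
    { toFun := fun s => ⟨fun e => s.1 (unitElement F X e),
        fun e e' f => s.2 _ _ (unitElementMap F X f)⟩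
      invFun := fun t => ⟨fun e => A.map (rep e).choose_spec.choose (t.1 (rep e).choose),
        fun e e' f => ?_⟩
      left_inv := ?_
      right_inv := ?_ }
  · -- naturality of the inverse
    calc A.map f (A.map (rep e).choose_spec.choose (t.1 (rep e).choose))
        = A.map ((rep e).choose_spec.choose ≫ f) (t.1 (rep e).choose) := by
          rw [FunctorToTypes.map_comp_apply]
      _ = A.map (rep e').choose_spec.choose (t.1 (rep e').choose) :=
          welldef F X A t.1 t.2 e' _ _
  · intro s
    apply Subtype.ext
    funext e
    show A.map (rep e).choose_spec.choose (s.1 (unitElement F X (rep e).choose)) = s.1 e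
    exact s.2 _ _ (rep e).choose_spec.choose
  · intro t
    apply Subtype.ext
    funext e
    show A.map (rep (unitElement F X e)).choose_spec.choose
        (t.1 (rep (unitElement F X e)).choose) = t.1 e
    have := welldef F X A t.1 t.2 (unitElement F X e)
        (rep (unitElement F X e)).choose_spec.choose (𝟙 (unitElement F X e))
    rw [this, FunctorToTypes.map_id_apply]
end
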